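/- arXiv:1607.02800 — 2 statements merged into one kernel-verified Lean document; each statement's English description precedes it below -/
import Mathlib

section
/- Let X be a nonnegative real random variable whose survival function is given by P(X > s) = (V₁ - V₀)/(V₁ - γ/c + (γ/c)·e^{cs}) for s ≥ 0 and P(X > s) = 1 for s < 0, where c > 0 and γ/c < V₀ < V₁. Then X is integrable and E[X] = (1/c) · ((V₁ - V₀)/(V₁ - γ/c)) · ln(V₁ / (γ/c)). -/
open MeasureTheory Filter Set Real Topology


lemma aux_int {a b c : ℝ} (ha : 0 < a) (hb : 0 < b) (hc : 0 < c) :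
    IntegrableOn (fun s : ℝ => 1 / (b + a * exp (c * s))) (Ioi 0) ∧
    ∫ s in Ioi 0, 1 / (b + a * exp (c * s)) = (1 / (b * c)) * Real.log ((a + b) / a) := by
  have hpos : ∀ s : ℝ, 0 < b + a * exp (c * s) := fun s => by positivity
  set F : ℝ → ℝ := fun s => (1 / (b * c)) * (c * s - Real.log (b + a * exp (c * s))) with hF
  have hderiv : ∀ s : ℝ, HasDerivAt F (1 / (b + a * exp (c * s))) s := by
    intro s
    have h1 : HasDerivAt (fun s : ℝ => b + a * exp (c * s)) (a * (c * exp (c * s))) s := by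
      have := (Real.hasDerivAt_exp (c * s)).comp s ((hasDerivAt_id s).const_mul c)
      simpa [mul_comm, mul_assoc] using ((this.const_mul a).const_add b)
    have h2 : HasDerivAt (fun s : ℝ => Real.log (b + a * exp (c * s)))
        ((a * (c * exp (c * s))) / (b + a * exp (c * s))) s := h1.log (hpos s).ne'
    have h3 := (((hasDerivAt_id s).const_mul c).sub h2).const_mul (1 / (b * c))
    refine h3.congr_deriv ?_
    have := (hpos s).ne'
    field_simp
    ring
  have hint : IntegrableOn (fun s : ℝ => 1 / (b + a * exp (c * s))) (Ioi 0) := by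
    have hexp : IntegrableOn (fun s : ℝ => (1 / a) * exp (-c * s)) (Ioi 0) :=
      (exp_neg_integrableOn_Ioi 0 hc).const_mul _
    refine hexp.integrable.mono ?_ ?_
    · exact (Continuous.div continuous_const
        (by continuity) (fun s => (hpos s).ne')).aestronglyMeasurable
    · filter_upwards with s
      rw [Real.norm_eq_abs, Real.norm_eq_abs, abs_of_pos (by positivity),
        abs_of_pos (by positivity)]
      have h1 : (1:ℝ)/(b + a*exp (c*s)) ≤ 1/(a*exp (c*s)) :=
        one_div_le_one_div_of_le (by positivity) (by linarith)
      have h2 : (1:ℝ)/(a*exp (c*s)) = (1/a) * exp (-c*s) := by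
        rw [neg_mul, Real.exp_neg]; field_simp
      linarith
  have htend : Tendsto F atTop (𝓝 ((1 / (b * c)) * (- Real.log a))) := by
    have hFeq : ∀ s : ℝ, F s = (1 / (b * c)) * (- (Real.log a + Real.log (1 + (b/a) * exp (-(c*s))))) := by
      intro s
      have key : b + a * exp (c * s) = (a * exp (c * s)) * (1 + (b/a) * exp (-(c*s))) := by
        rw [Real.exp_neg]
        field_simp
        ring
      have hlog : Real.log (b + a * exp (c * s))
          = Real.log a + c * s + Real.log (1 + (b/a) * exp (-(c*s))) := by
        rw [key, Real.log_mul (by positivity) (by positivity),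
          Real.log_mul ha.ne' (exp_pos _).ne', Real.log_exp]
      simp only [hF, hlog]
      ring
    rw [funext hFeq]
    apply Tendsto.const_mul
    apply Tendsto.neg
    have h1 : Tendsto (fun s : ℝ => 1 + (b/a) * exp (-(c*s))) atTop (𝓝 1) := by
      have : Tendsto (fun s : ℝ => -(c*s)) atTop atBot := by
        apply tendsto_neg_atBot_iff.mpr
        exact (tendsto_const_mul_atTop_of_pos hc).mpr tendsto_id
      have h := (Real.tendsto_exp_atBot.comp this).const_mul (b/a)
      simpa using (tendsto_const_nhds.add h)
    have h2 : Tendsto (fun s : ℝ => Real.log (1 + (b/a) * exp (-(c*s)))) atTop (𝓝 0) := by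
      have := ((Real.continuousAt_log (by norm_num : (1:ℝ) ≠ 0)).tendsto).comp h1
      simpa [Function.comp_def] using this
    simpa using tendsto_const_nhds.add h2
  refine ⟨hint, ?_⟩
  have := integral_Ioi_of_hasDerivAt_of_tendsto'
    (f := F) (fun x _ => hderiv x) hint htend
  have hF0 : F 0 = (1/(b*c)) * (- Real.log (a+b)) := by
    simp [hF, Real.exp_zero, add_comm b a]
  rw [this, hF0, Real.log_div (by positivity) ha.ne']
  ring

/-- the up-cross-time controlling distribution has finite mean
`(1/c)·((V₁-V₀)/(V₁-γ/c))·ln(V₁/(γ/c))`. -/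
theorem stmt_4 {Ω : Type*} [MeasurableSpace Ω] (P : Measure Ω) [IsProbabilityMeasure P]
    (X : Ω → ℝ) (hXmeas : Measurable X) (hXnonneg : ∀ ω, 0 ≤ X ω)
    (c γ V₀ V₁ : ℝ) (hc : 0 < c) (hγ : 0 ≤ γ)
    (hV₀ : γ / c < V₀) (hV₁ : V₀ < V₁)
    (hsurv : ∀ s : ℝ, 0 ≤ s →
      P {ω | s < X ω} = ENNReal.ofReal ((V₁ - V₀) / (V₁ - γ / c + (γ / c) * exp (c * s))))
    (hsurv' : ∀ s : ℝ, s < 0 → P {ω | s < X ω} = 1) :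
    Integrable X P ∧
      ∫ ω, X ω ∂P = (1 / c) * ((V₁ - V₀) / (V₁ - γ / c)) * Real.log (V₁ / (γ / c)) := by
  set a := γ / c with ha
  have ha0 : 0 ≤ a := div_nonneg hγ hc.le
  rcases ha0.eq_or_lt with haz | hapos
  · -- a = 0 : contradiction with hsurv being constant positive
    exfalso
    have hV₁pos : 0 < V₁ := lt_trans (haz ▸ hV₀) hV₁
    set k : ℝ := (V₁ - V₀) / V₁ with hk
    have hkpos : 0 < k := div_pos (by linarith) hV₁pos
    have hs : ∀ n : ℕ, P {ω | (n : ℝ) < X ω} = ENNReal.ofReal k := by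
      intro n
      rw [hsurv n (Nat.cast_nonneg n), ← haz]
      norm_num
      rw [hk]
    have hanti : Antitone (fun n : ℕ => {ω | (n : ℝ) < X ω}) := by
      intro m n hmn ω hω
      exact lt_of_le_of_lt (show (m:ℝ) ≤ n from Nat.cast_le.mpr hmn) hω
    have hiInter : (⋂ n : ℕ, {ω | (n : ℝ) < X ω}) = ∅ := by
      ext ω
      simp only [mem_iInter, mem_empty_iff_false, iff_false, not_forall, mem_setOf_eq, not_lt]
      obtain ⟨n, hn⟩ := exists_nat_gt (X ω)
      exact ⟨n, hn.le⟩
    have hmeas : ∀ n : ℕ, NullMeasurableSet {ω | (n : ℝ) < X ω} P :=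
      fun n => (hXmeas measurableSet_Ioi).nullMeasurableSet
    have htend := tendsto_measure_iInter_atTop (μ := P) hmeas hanti
      ⟨0, measure_ne_top P _⟩
    rw [hiInter, measure_empty] at htend
    have htend' : Tendsto (fun _ : ℕ => ENNReal.ofReal k) atTop (𝓝 0) := by
      refine htend.congr fun n => ?_
      simp [hs n]
    have : ENNReal.ofReal k = 0 := tendsto_nhds_unique tendsto_const_nhds htend'
    rw [ENNReal.ofReal_eq_zero] at this
    linarith
  · -- main case
    set b : ℝ := V₁ - a with hb
    have hbpos : 0 < b := by simp only [hb]; linarith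
    have hab : a + b = V₁ := by simp [hb]
    set f : ℝ → ℝ := fun s => (V₁ - V₀) * (1 / (b + a * exp (c * s))) with hf
    have hfnn : ∀ s, 0 ≤ f s := by
      intro s
      have : 0 < b + a * exp (c * s) := by positivity
      have : 0 ≤ (1 : ℝ) / (b + a * exp (c * s)) := by positivity
      have hV : (0:ℝ) ≤ V₁ - V₀ := by linarith
      exact mul_nonneg hV this
    have hfsurv : ∀ s : ℝ, 0 ≤ s → P {ω | s < X ω} = ENNReal.ofReal (f s) := by
      intro s hs
      rw [hsurv s hs]
      congr 1
      simp only [hf, hb]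
      ring
    obtain ⟨hint1, hval1⟩ := aux_int hapos hbpos hc
    have hf_int : IntegrableOn f (Ioi 0) := hint1.const_mul _
    have hf_val : ∫ s in Ioi 0, f s
        = (V₁ - V₀) * ((1 / (b * c)) * Real.log ((a + b) / a)) := by
      rw [hf]
      rw [MeasureTheory.integral_const_mul, hval1]
    have key : ∫⁻ ω, ENNReal.ofReal (X ω) ∂P = ∫⁻ t in Ioi 0, P {ω | t < X ω} :=
      lintegral_eq_lintegral_meas_lt P (Eventually.of_forall hXnonneg) hXmeas.aemeasurable
    have key2 : ∫⁻ t in Ioi 0, P {ω | t < X ω} = ∫⁻ t in Ioi 0, ENNReal.ofReal (f t) :=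
      setLIntegral_congr_fun measurableSet_Ioi
        (fun t ht => hfsurv t (le_of_lt ht))
    have key3 : ∫⁻ t in Ioi 0, ENNReal.ofReal (f t) = ENNReal.ofReal (∫ t in Ioi 0, f t) :=
      (ofReal_integral_eq_lintegral_ofReal hf_int
        (Eventually.of_forall fun t => hfnn t)).symm
    have hfin : ∫⁻ ω, ENNReal.ofReal (X ω) ∂P ≠ ⊤ := by
      rw [key, key2, key3]; exact ENNReal.ofReal_ne_top
    have hXint : Integrable X P :=
      ⟨hXmeas.aestronglyMeasurable,
        (hasFiniteIntegral_iff_ofReal (Eventually.of_forall hXnonneg)).mpr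
          (lt_top_iff_ne_top.mpr hfin)⟩
    refine ⟨hXint, ?_⟩
    have hI : ∫ ω, X ω ∂P = (∫⁻ ω, ENNReal.ofReal (X ω) ∂P).toReal :=
      integral_eq_lintegral_of_nonneg_ae (Eventually.of_forall hXnonneg)
        hXmeas.aestronglyMeasurable
    rw [hI, key, key2, key3, ENNReal.toReal_ofReal
      (setIntegral_nonneg measurableSet_Ioi fun t _ => hfnn t), hf_val, hab]
    have hbne : b ≠ 0 := hbpos.ne'
    have hcne : c ≠ 0 := hc.ne'
    clear_value a b
    ring
end

section
/- For fixed constants c > 0 and V₁ > a > 0 with V₁/a > 1, consider the function φ(β) = (1 - ln β)/((1 - β)·L) on β ∈ (0,1), where L = ln(V₁/a) > 0. Then φ attains its minimum at β* = -1/W₋₁(-e^{-2}), where W₋₁ is the lower branch of the Lambert W function, and the minimum value is φ(β*) = -W₋₁(-e^{-2})/L. -/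
open Real Set

/-- the function `φ(β) = (1 - ln β)/((1-β)·L)` on `(0,1)` attains its
minimum at `β* = -1/W₋₁(-e⁻²)`, with minimum value `-W₋₁(-e⁻²)/L`.
Here `w = W₋₁(-e⁻²)` is characterized by `w·e^w = -e⁻²` and `w ≤ -1`. -/
theorem stmt_6 (c V₁ a : ℝ) (hc : 0 < c) (ha : 0 < a) (hV : a < V₁)
    (L : ℝ) (hL : L = Real.log (V₁ / a)) (hLpos : 0 < L)
    (w : ℝ) (hw : w * Real.exp w = -Real.exp (-2)) (hw' : w ≤ -1)
    (φ : ℝ → ℝ) (hφ : ∀ β, φ β = (1 - Real.log β) / ((1 - β) * L)) :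
    (-1 / w) ∈ Set.Ioo (0:ℝ) 1 ∧
      (∀ β ∈ Set.Ioo (0:ℝ) 1, φ (-1 / w) ≤ φ β) ∧
      φ (-1 / w) = -w / L := by
  have hwneg : w < 0 := lt_of_le_of_lt hw' (by norm_num)
  have hwn1 : w < -1 := by
    rcases lt_or_eq_of_le hw' with h | h
    · exact h
    · exfalso
      rw [h] at hw
      have he : Real.exp (-1) = Real.exp (-2) := by nlinarith [hw]
      have := Real.exp_injective he
      norm_num at this
  have hnwpos : (0:ℝ) < -w := by linarith
  have hlog : Real.log (-w) = -2 - w := by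
    have h1 : (-w) * Real.exp w = Real.exp (-2) := by linarith
    have h2 : Real.log ((-w) * Real.exp w) = Real.log (-w) + w := by
      rw [Real.log_mul (ne_of_gt hnwpos) (Real.exp_ne_zero w), Real.log_exp]
    rw [h1, Real.log_exp] at h2
    linarith
  have hw0 : w ≠ 0 := ne_of_lt hwneg
  have hmem : (-1 / w) ∈ Set.Ioo (0:ℝ) 1 := by
    have heq : -1 / w = 1 / (-w) := by field_simp [hw0]
    constructor
    · rw [heq]; positivity
    · rw [heq]; rw [div_lt_one hnwpos]; linarith
  have hlogβ : Real.log (-1 / w) = 2 + w := by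
    have heq : -1 / w = (-w)⁻¹ := by field_simp [hw0]
    rw [heq, Real.log_inv, hlog]; ring
  have hval : φ (-1 / w) = -w / L := by
    rw [hφ, hlogβ]
    have hL0 : L ≠ 0 := ne_of_gt hLpos
    have h1β : (1 : ℝ) - (-1 / w) = (w + 1) / w := by field_simp; ring
    rw [h1β]
    have hd : (w+1)/w > 0 := div_pos_of_neg_of_neg (by linarith) hwneg
    rw [div_eq_div_iff (by positivity) (ne_of_gt hLpos)]
    field_simp
    ring
  refine ⟨hmem, ?_, hval⟩
  intro β hβ
  rw [hval, hφ]
  have hβ0 : 0 < β := hβ.1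
  have hβ1 : β < 1 := hβ.2
  have hkey : -w * (1 - β) ≤ 1 - Real.log β := by
    have hx : 0 < -w * β := mul_pos hnwpos hβ0
    have h1 := Real.log_le_sub_one_of_pos hx
    rw [Real.log_mul (ne_of_gt hnwpos) (ne_of_gt hβ0), hlog] at h1
    nlinarith
  have hden : 0 < (1 - β) * L := mul_pos (by linarith) hLpos
  have : -w / L = (-w * (1 - β)) / ((1 - β) * L) := by
    rw [eq_div_iff (ne_of_gt hden)]
    field_simp
  rw [this]
  gcongr
end
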